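/- arXiv:2405.17107 — 2 statements merged into one kernel-verified Lean document; each statement's English description precedes it below -/
import Mathlib

section
/- Let A ∈ ℝ^{d×d} be invertible with d ≥ 1. Then the Frobenius norm of the inverse satisfies ‖A^{−1}‖_F ≤ d · ‖A‖_F^{d−1} / |det(A)|. -/
/-- Frobenius norm of a real square matrix. -/
noncomputable def frobeniusNorm {d : ℕ} (A : Matrix (Fin d) (Fin d) ℝ) : ℝ :=
  Real.sqrt (∑ i, ∑ j, (A i j) ^ 2)

section Aux
open Matrix
lemma trace_eq_sum_eigenvalues {n : Type*} [Fintype n] [DecidableEq n]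
    {A : Matrix n n ℝ} (hA : A.IsHermitian) :
    A.trace = ∑ i, hA.eigenvalues i := by
  conv_lhs => rw [hA.spectral_theorem]
  rw [Unitary.conjStarAlgAut_apply, Matrix.trace_mul_cycle]
  rw [Unitary.coe_star_mul_self, one_mul]
  simp [Matrix.trace_diagonal]

lemma det_sq_le_sum_sq {n : ℕ} (M : Matrix (Fin n) (Fin n) ℝ) :
    M.det ^ 2 ≤ (∑ i, ∑ j, M i j ^ 2) ^ n := by
  have hS : (Mᴴ * M).PosSemidef := Matrix.posSemidef_conjTranspose_mul_self M
  have hH := hS.1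
  have hdet : (Mᴴ * M).det = M.det ^ 2 := by
    rw [Matrix.det_mul, Matrix.det_conjTranspose]
    simp [sq]
  have htr : (Mᴴ * M).trace = ∑ i, ∑ j, M i j ^ 2 := by
    rw [Matrix.trace]
    simp only [Matrix.diag_apply, Matrix.mul_apply, Matrix.conjTranspose_apply, star_trivial]
    rw [Finset.sum_comm]
    simp [sq]
  have h1 : M.det ^ 2 = ∏ i, hH.eigenvalues i := by
    rw [← hdet]
    have := hH.det_eq_prod_eigenvalues
    push_cast at this
    exact this
  have h2 : (∑ i, ∑ j, M i j ^ 2) = ∑ i, hH.eigenvalues i := by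
    rw [← htr, trace_eq_sum_eigenvalues]
  rw [h1, h2]
  have hnn : ∀ i, 0 ≤ hH.eigenvalues i := fun i => hS.eigenvalues_nonneg i
  calc ∏ i, hH.eigenvalues i ≤ ∏ _i : Fin n, (∑ j, hH.eigenvalues j) := by
        apply Finset.prod_le_prod (fun i _ => hnn i)
        intro i _
        exact Finset.single_le_sum (fun j _ => hnn j) (Finset.mem_univ i)
    _ = (∑ j, hH.eigenvalues j) ^ n := by simp

lemma sum_succAbove_le {n : ℕ} (f : Fin (n+1) → ℝ) (hf : ∀ i, 0 ≤ f i) (k : Fin (n+1)) :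
    ∑ p : Fin n, f (k.succAbove p) ≤ ∑ i, f i := by
  rw [Fin.sum_univ_succAbove f k]
  have := hf k
  linarith

lemma adjugate_sq_le {n : ℕ} (A : Matrix (Fin (n+1)) (Fin (n+1)) ℝ) (i j : Fin (n+1)) :
    (A.adjugate i j) ^ 2 ≤ (∑ i, ∑ j, A i j ^ 2) ^ n := by
  rw [Matrix.adjugate_fin_succ_eq_det_submatrix, mul_pow]
  rw [show ((-1 : ℝ) ^ ((j:ℕ) + i)) ^ 2 = 1 by rw [← pow_mul, mul_comm, pow_mul]; simp, one_mul]
  calc (A.submatrix j.succAbove i.succAbove).det ^ 2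
      ≤ (∑ p, ∑ q, A.submatrix j.succAbove i.succAbove p q ^ 2) ^ n := det_sq_le_sum_sq _
    _ ≤ (∑ i, ∑ j, A i j ^ 2) ^ n := by
        apply pow_le_pow_left₀
        · positivity
        calc ∑ p, ∑ q, (A (j.succAbove p) (i.succAbove q)) ^ 2
            ≤ ∑ p, ∑ c, (A (j.succAbove p) c) ^ 2 := by
              apply Finset.sum_le_sum
              intro p _
              exact sum_succAbove_le (fun c => A (j.succAbove p) c ^ 2) (fun c => sq_nonneg _) i
          _ ≤ ∑ r, ∑ c, A r c ^ 2 := sum_succAbove_le (fun r => ∑ c, A r c ^ 2)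
              (fun r => Finset.sum_nonneg fun c _ => sq_nonneg _) j

end Aux

/-- bound on the Frobenius norm of the inverse matrix. -/
theorem statement10 (d : ℕ) (hd : 1 ≤ d) (A : Matrix (Fin d) (Fin d) ℝ)
    (hA : IsUnit A.det) :
    frobeniusNorm A⁻¹ ≤ (d : ℝ) * frobeniusNorm A ^ (d - 1) / |A.det| := by
  obtain ⟨n, rfl⟩ : ∃ n, d = n + 1 := ⟨d - 1, by omega⟩
  have hdet : A.det ≠ 0 := hA.ne_zero
  have hinv : A⁻¹ = A.det⁻¹ • A.adjugate := by
    rw [Matrix.inv_def, Ring.inverse_eq_inv']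
  have hS : (0:ℝ) ≤ ∑ i, ∑ j, A i j ^ 2 := by positivity
  have key : frobeniusNorm A⁻¹ = |A.det|⁻¹ * frobeniusNorm A.adjugate := by
    rw [hinv, frobeniusNorm, frobeniusNorm]
    simp only [Matrix.smul_apply, smul_eq_mul, mul_pow]
    rw [show (∑ i, ∑ j, (A.det⁻¹ ^ 2 * A.adjugate i j ^ 2)) =
        A.det⁻¹ ^ 2 * ∑ i, ∑ j, A.adjugate i j ^ 2 by
      rw [Finset.mul_sum]; congr 1; ext i; rw [Finset.mul_sum]]
    rw [Real.sqrt_mul (sq_nonneg _), Real.sqrt_sq_eq_abs, abs_inv]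
  rw [key, Nat.add_sub_cancel, div_eq_inv_mul]
  apply mul_le_mul_of_nonneg_left _ (by positivity)
  -- frobeniusNorm A.adjugate ≤ (n+1) * frobeniusNorm A ^ n
  have h1 : ∑ i, ∑ j, A.adjugate i j ^ 2 ≤ ((n+1:ℕ):ℝ)^2 * (∑ i, ∑ j, A i j ^ 2) ^ n := by
    calc ∑ i, ∑ j, A.adjugate i j ^ 2
        ≤ ∑ _i : Fin (n+1), ∑ _j : Fin (n+1), (∑ i, ∑ j, A i j ^ 2) ^ n := by
          apply Finset.sum_le_sum; intro i _
          apply Finset.sum_le_sum; intro j _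
          exact adjugate_sq_le A i j
      _ = ((n+1:ℕ):ℝ)^2 * (∑ i, ∑ j, A i j ^ 2) ^ n := by
          simp [Finset.sum_const]; ring
  calc frobeniusNorm A.adjugate ≤ Real.sqrt (((n+1:ℕ):ℝ)^2 * (∑ i, ∑ j, A i j ^ 2) ^ n) :=
        Real.sqrt_le_sqrt h1
    _ = ((n+1:ℕ):ℝ) * frobeniusNorm A ^ n := by
        rw [Real.sqrt_mul (by positivity), Real.sqrt_sq (by positivity)]
        congr 1
        rw [frobeniusNorm]
        conv_lhs => rw [← Real.sq_sqrt hS]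
        rw [← pow_mul, mul_comm 2 n, pow_mul, Real.sqrt_sq (by positivity)]
end

section
/- Let 1 ≤ m ≤ d and f ∈ C²(ℝ^d, ℝ^m). Define Ψ^f : ℝ^d × S^{m−1} → ℝ^m by Ψ^f(x, v) = Π_m(Df(x)ᵀ·v), the first m components of Df(x)ᵀ·v. Suppose that for every (x, v) ∈ ℝ^d × S^{m−1} with Ψ^f(x, v) = 0, the differential of Ψ^f at (x, v) (as a map on the manifold ℝ^d × S^{m−1}) is surjective onto ℝ^m. Then for every compact set K ⊂ ℝ^d, H^{d−1}(Σ_f ∩ K) < +∞, where Σ_f = {x ∈ ℝ^d : rank(Df(x)) ≤ m−1}. -/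
open MeasureTheory Set Topology
open scoped ENNReal

noncomputable section

abbrev E (n : ℕ) : Type := EuclideanSpace ℝ (Fin n)

def unitCube (d : ℕ) : Set (E d) := {x | ∀ i, x i ∈ Set.Icc (0:ℝ) 1}

def openCube (d : ℕ) : Set (E d) := {x | ∀ i, x i ∈ Set.Ioo (0:ℝ) 1}

/-- Jacobian matrix of `f` at `x`. -/
def jac {d m : ℕ} (f : E d → E m) (x : E d) : Matrix (Fin m) (Fin d) ℝ :=
  Matrix.of fun i j => fderiv ℝ f x (EuclideanSpace.single j 1) i

/-- Critical set of `g` in the open unit cube. -/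
def critSet {d m : ℕ} (g : E d → E m) : Set (E d) :=
  {x ∈ openCube d | (jac g x).rank ≤ m - 1}

/-- `N_f(ε)`. -/
def Nf {d m : ℕ} (f : E d → E m) (ε : ℝ) : ℝ≥0∞ :=
  sInf { h : ℝ≥0∞ | ∃ g : E d → E m, ContDiff ℝ 1 g ∧
    (∀ x ∈ unitCube d, ‖g x - f x‖ ≤ ε ∧ ‖fderiv ℝ g x - fderiv ℝ f x‖ ≤ ε) ∧
    h = μH[(d:ℝ) - 1] (critSet g) }

/-- minimal modulus of continuity of `Df` on `U`. -/
def omegaC1 {d m : ℕ} (f : E d → E m) (U : Set (E d)) (δ : ℝ) : ℝ :=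
  sSup {r : ℝ | ∃ x ∈ U, ∃ y ∈ U, ‖x - y‖ ≤ δ ∧ r = ‖fderiv ℝ f x - fderiv ℝ f y‖}

def betaf {d m : ℕ} (f : E d → E m) (δ : ℝ) : ℝ :=
  omegaC1 f (unitCube d) (Real.sqrt d * δ) *
    (1 + Real.sqrt d * δ + 4 * (d:ℝ) ^ ((d:ℝ) + 1/2) * ((d:ℝ)+1)^4)

end

noncomputable section

open scoped RealInnerProductSpace

/-- `Ψ^f(x,v) = Π_m(Df(x)ᵀ·v)`: the first `m` components of `Df(x)ᵀ·v`. -/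
def PsiMap {d m : ℕ} (hmd : m ≤ d) (f : E d → E m) : E d × E m → E m :=
  fun p => (WithLp.toLp 2 (fun i => ∑ k, jac f p.1 k (Fin.castLE hmd i) * p.2 k) : E m)


open Bornology Matrix

lemma auxPiFinite (n : ℕ) (s : Set (Fin n → ℝ)) (hs : IsBounded s) :
    μH[(n:ℝ)] s < ⊤ := by
  have h : (μH[(n:ℝ)] : Measure (Fin n → ℝ)) = volume := by
    have := hausdorffMeasure_pi_real (ι := Fin n)
    simpa using this
  rw [h]
  exact hs.measure_lt_top


lemma psi_contDiff {d m : ℕ} (hmd : m ≤ d) (f : E d → E m) (hf : ContDiff ℝ 2 f) :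
    ContDiff ℝ 1 (PsiMap hmd f) := by
  have hDf : ContDiff ℝ 1 (fun x => fderiv ℝ f x) := hf.fderiv_right (by norm_num)
  rw [contDiff_euclidean]
  intro i
  show ContDiff ℝ 1 (fun p : E d × E m => ∑ k, jac f p.1 k (Fin.castLE hmd i) * p.2 k)
  apply ContDiff.sum
  intro k _
  have h1 : ContDiff ℝ 1 (fun p : E d × E m => jac f p.1 k (Fin.castLE hmd i)) := by
    have hc1 : ContDiff ℝ 1 (fun A : E d →L[ℝ] E m =>
        (EuclideanSpace.proj k : E m →L[ℝ] ℝ)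
          ((ContinuousLinearMap.apply ℝ (E m) (EuclideanSpace.single (Fin.castLE hmd i) (1:ℝ))) A)) :=
      (EuclideanSpace.proj k : E m →L[ℝ] ℝ).contDiff.comp
        (ContinuousLinearMap.apply ℝ (E m) (EuclideanSpace.single (Fin.castLE hmd i) (1:ℝ))).contDiff
    exact (hc1.comp hDf).comp contDiff_fst
  have h2 : ContDiff ℝ 1 (fun p : E d × E m => p.2 k) :=
    (EuclideanSpace.proj k : E m →L[ℝ] ℝ).contDiff.comp contDiff_snd
  exact h1.mul h2
def Fmap {d m : ℕ} (hmd : m ≤ d) (f : E d → E m) : E d × E m → E m × ℝ :=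
  fun q => (PsiMap hmd f q, ⟪q.2, q.2⟫)

lemma fmap_contDiff {d m : ℕ} (hmd : m ≤ d) (f : E d → E m) (hf : ContDiff ℝ 2 f) :
    ContDiff ℝ 1 (Fmap hmd f) :=
  (psi_contDiff hmd f hf).prodMk ((contDiff_snd.inner ℝ contDiff_snd))

lemma fmap_surj {d m : ℕ} (hmd : m ≤ d) (f : E d → E m) (hf : ContDiff ℝ 2 f)
    (p : E d × E m) (hv : ‖p.2‖ = 1) (hp : PsiMap hmd f p = 0)
    (htr : ∀ z : E m, ∃ u : E d, ∃ w : E m, ⟪w, p.2⟫ = 0 ∧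
        fderiv ℝ (PsiMap hmd f) p (u, w) = z) :
    Function.Surjective (fderiv ℝ (Fmap hmd f) p) := by
  have hΨ : HasFDerivAt (PsiMap hmd f) (fderiv ℝ (PsiMap hmd f) p) p :=
    (((psi_contDiff hmd f hf).differentiable one_ne_zero) p).hasFDerivAt
  have hρ : HasFDerivAt (fun q : E d × E m => ⟪q.2, q.2⟫)
      ((fderivInnerCLM ℝ (p.2, p.2)).comp
        ((ContinuousLinearMap.snd ℝ (E d) (E m)).prod (ContinuousLinearMap.snd ℝ (E d) (E m)))) p :=
    (hasFDerivAt_snd (p := p)).inner ℝ (hasFDerivAt_snd (p := p))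
  have hF : HasFDerivAt (Fmap hmd f)
      ((fderiv ℝ (PsiMap hmd f) p).prod
        ((fderivInnerCLM ℝ (p.2, p.2)).comp
          ((ContinuousLinearMap.snd ℝ (E d) (E m)).prod (ContinuousLinearMap.snd ℝ (E d) (E m))))) p :=
    hΨ.prodMk hρ
  rw [hF.fderiv]
  rintro ⟨z, t⟩
  obtain ⟨u, w, hw, hzw⟩ := htr (z - fderiv ℝ (PsiMap hmd f) p ((0 : E d), (t/2) • p.2))
  refine ⟨(u, w + (t/2) • p.2), ?_⟩
  have h1 : ((u, w + (t/2) • p.2) : E d × E m) = (u, w) + ((0 : E d), (t/2) • p.2) := by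
    simp
  rw [ContinuousLinearMap.prod_apply, Prod.mk.injEq]
  constructor
  · show fderiv ℝ (PsiMap hmd f) p (u, w + (t/2) • p.2) = z
    rw [h1, map_add, hzw]
    abel
  · show fderivInnerCLM ℝ (p.2, p.2) (w + (t/2) • p.2, w + (t/2) • p.2) = t
    rw [fderivInnerCLM_apply]
    have hvv : ⟪p.2, p.2⟫ = 1 := by
      rw [real_inner_self_eq_norm_sq, hv]; norm_num
    have hwv : ⟪p.2, w⟫ = 0 := by rw [real_inner_comm]; exact hw
    simp [inner_add_left, inner_add_right, inner_smul_left, inner_smul_right, hvv, hwv, hw, hv]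
lemma exists_unit_kernel {d m : ℕ} (hm : 1 ≤ m) (A : Matrix (Fin m) (Fin d) ℝ)
    (hA : A.rank ≤ m - 1) :
    ∃ v : E m, ‖v‖ = 1 ∧ ∀ j : Fin d, ∑ k, A k j * v k = 0 := by
  have hrk : (Aᵀ).rank < m := by
    rw [Matrix.rank_transpose]; omega
  have h1 := LinearMap.finrank_range_add_finrank_ker (Aᵀ).mulVecLin
  have h2 : Module.finrank ℝ (Fin m → ℝ) = m := by simp
  have hne : LinearMap.ker (Aᵀ).mulVecLin ≠ ⊥ := by
    intro hbot
    rw [hbot] at h1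
    simp [h2] at h1
    rw [Matrix.rank] at hrk
    omega
  obtain ⟨v0, hv0mem, hv0ne⟩ := Submodule.exists_mem_ne_zero_of_ne_bot hne
  have hv0 : (Aᵀ).mulVec v0 = 0 := hv0mem
  have hv0' : ∀ j, ∑ k, A k j * v0 k = 0 := by
    intro j
    have := congrFun hv0 j
    simpa [Matrix.mulVec, dotProduct, Matrix.transpose] using this
  set ve : E m := WithLp.toLp 2 v0 with hve
  have hvene : ve ≠ 0 := by
    intro h; apply hv0ne; have := congrArg WithLp.ofLp h; rw [hve] at this; simpa using this
  have hnorm : ‖ve‖ ≠ 0 := by simpa using hvene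
  refine ⟨‖ve‖⁻¹ • ve, ?_, ?_⟩
  · rw [norm_smul]
    simp [hnorm]
  · intro j
    have : ∀ k, (‖ve‖⁻¹ • ve) k = ‖ve‖⁻¹ * v0 k := by
      intro k; simp [hve]
    simp only [this]
    calc ∑ k, A k j * (‖ve‖⁻¹ * v0 k) = ‖ve‖⁻¹ * ∑ k, A k j * v0 k := by
          rw [Finset.mul_sum]; congr 1; funext k; ring_nf
      _ = 0 := by rw [hv0' j]; ring
set_option maxHeartbeats 1000000 in
lemma local_finite {d m : ℕ} (hm : 1 ≤ m) (hmd : m ≤ d) (f : E d → E m) (hf : ContDiff ℝ 2 f)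
    (p : E d × E m) (hv : ‖p.2‖ = 1) (hp : PsiMap hmd f p = 0)
    (htr : ∀ z : E m, ∃ u : E d, ∃ w : E m, ⟪w, p.2⟫ = 0 ∧
        fderiv ℝ (PsiMap hmd f) p (u, w) = z) :
    ∃ U ∈ 𝓝 p,
      μH[(d:ℝ)-1] ({q : E d × E m | PsiMap hmd f q = 0 ∧ ‖q.2‖ = 1} ∩ U) < ⊤ := by
  have hd1 : 1 ≤ d := le_trans hm hmd
  set DF := fderiv ℝ (Fmap hmd f) p with hDF
  have hsurj := fmap_surj hmd f hf p hv hp htr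
  set k : Submodule ℝ (E d × E m) := LinearMap.ker (DF : (E d × E m) →ₗ[ℝ] E m × ℝ) with hk
  have hfrk : Module.finrank ℝ k = d - 1 := by
    have h1 := LinearMap.finrank_range_add_finrank_ker (DF : (E d × E m) →ₗ[ℝ] E m × ℝ)
    have h2 : LinearMap.range (DF : (E d × E m) →ₗ[ℝ] E m × ℝ) = ⊤ :=
      LinearMap.range_eq_top.mpr hsurj
    rw [h2] at h1
    have h3 : Module.finrank ℝ (E d × E m) = d + m := by
      simp [Module.finrank_prod, finrank_euclideanSpace_fin]
    have h4 : Module.finrank ℝ (⊤ : Submodule ℝ (E m × ℝ)) = m + 1 := by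
      simp [finrank_top, Module.finrank_prod, finrank_euclideanSpace_fin]
    rw [h3, h4] at h1
    have : LinearMap.ker (DF : (E d × E m) →ₗ[ℝ] E m × ℝ) = k := rfl
    rw [this] at h1
    omega
  obtain ⟨qc, hqc⟩ := Submodule.exists_isCompl k
  set π : (E d × E m) →ₗ[ℝ] k := k.linearProjOfIsCompl qc hqc with hπ
  set eK : k ≃L[ℝ] (Fin (d-1) → ℝ) :=
    ContinuousLinearEquiv.ofFinrankEq (by rw [hfrk]; simp) with heK
  set L : (E d × E m) →L[ℝ] (Fin (d-1) → ℝ) :=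
    (eK.toContinuousLinearMap).comp (LinearMap.toContinuousLinearMap π) with hL
  set T : (E d × E m) →L[ℝ] (E m × ℝ) × (Fin (d-1) → ℝ) := DF.prod L with hT
  have hTinj : Function.Injective T := by
    rw [injective_iff_map_eq_zero]
    intro e he'
    have h1 : DF e = 0 := congrArg Prod.fst he'
    have h2 : L e = 0 := congrArg Prod.snd he'
    have hek : e ∈ k := h1
    have h3 : π e = ⟨e, hek⟩ := Submodule.linearProjOfIsCompl_apply_left hqc ⟨e, hek⟩
    have h4 : eK (π e) = 0 := h2
    rw [h3] at h4
    have h5 : (⟨e, hek⟩ : k) = 0 := by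
      have := eK.injective (a₁ := ⟨e, hek⟩) (a₂ := 0) (by simpa using h4)
      exact this
    simpa [Submodule.mk_eq_zero] using h5
  have hfr : Module.finrank ℝ (E d × E m)
      = Module.finrank ℝ ((E m × ℝ) × (Fin (d-1) → ℝ)) := by
    simp [Module.finrank_prod, finrank_euclideanSpace_fin]
    omega
  set eL := LinearMap.linearEquivOfInjective
    (T : (E d × E m) →ₗ[ℝ] (E m × ℝ) × (Fin (d-1) → ℝ)) hTinj hfr with heL
  set T' := eL.toContinuousLinearEquiv with hT'
  have hTT' : (T' : (E d × E m) →L[ℝ] (E m × ℝ) × (Fin (d-1) → ℝ)) = T := by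
    apply ContinuousLinearMap.ext
    intro e
    show T' e = T e
    rw [hT']
    rw [LinearEquiv.coe_toContinuousLinearEquiv']
    rw [heL, LinearMap.linearEquivOfInjective_apply]
    rfl
  set G : E d × E m → (E m × ℝ) × (Fin (d-1) → ℝ) := fun q => (Fmap hmd f q, L q) with hG
  have hGs : HasStrictFDerivAt G (T' : (E d × E m) →L[ℝ] (E m × ℝ) × (Fin (d-1) → ℝ)) p := by
    rw [hTT', hT]
    exact ((fmap_contDiff hmd f hf).hasStrictFDerivAt one_ne_zero).prodMk L.hasStrictFDerivAt
  set inv := hGs.localInverse G T' p with hinv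
  obtain ⟨c, t, ht, hlip⟩ := hGs.to_localInverse.exists_lipschitzOnWith
  have hev : ∀ᶠ q in 𝓝 p, inv (G q) = q := hGs.eventually_left_inverse
  have hGc : ContinuousAt G p := hGs.continuousAt
  set U : Set (E d × E m) :=
    {q | inv (G q) = q} ∩ G ⁻¹' t ∩ Metric.ball p 1 with hU
  have hUmem : U ∈ 𝓝 p :=
    Filter.inter_mem (Filter.inter_mem hev (hGc.preimage_mem_nhds ht))
      (Metric.ball_mem_nhds p one_pos)
  refine ⟨U, hUmem, ?_⟩
  set R := ‖L‖ * (‖p‖ + 1) with hR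
  set S : Set ((E m × ℝ) × (Fin (d-1) → ℝ)) :=
    ({(((0:E m), (1:ℝ)))} ×ˢ Metric.closedBall (0 : Fin (d-1) → ℝ) R) ∩ t with hS
  have hsub : {q : E d × E m | PsiMap hmd f q = 0 ∧ ‖q.2‖ = 1} ∩ U ⊆ inv '' S := by
    rintro q ⟨⟨hq0, hq1⟩, ⟨hinvq, hqt⟩, hqb⟩
    have hFq : Fmap hmd f q = ((0:E m), (1:ℝ)) := by
      rw [Fmap]
      refine Prod.ext hq0 ?_
      show ⟪q.2, q.2⟫ = 1
      rw [real_inner_self_eq_norm_sq, hq1]; norm_num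
    have hLq : L q ∈ Metric.closedBall (0 : Fin (d-1) → ℝ) R := by
      rw [Metric.mem_closedBall, dist_zero_right]
      calc ‖L q‖ ≤ ‖L‖ * ‖q‖ := L.le_opNorm q
        _ ≤ ‖L‖ * (‖p‖ + 1) := by
            apply mul_le_mul_of_nonneg_left _ (norm_nonneg L)
            have : dist q p < 1 := hqb
            calc ‖q‖ ≤ ‖p‖ + dist q p := by
                  rw [dist_eq_norm]
                  calc ‖q‖ = ‖p + (q - p)‖ := by rw [show p + (q - p) = q from by abel]
                    _ ≤ ‖p‖ + ‖q - p‖ := norm_add_le _ _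
              _ ≤ ‖p‖ + 1 := by linarith
    have hGqS : G q ∈ S := by
      constructor
      · rw [hG]
        simp only [mem_prod, mem_singleton_iff]
        exact ⟨hFq, hLq⟩
      · exact hqt
    exact ⟨G q, hGqS, hinvq⟩
  have hd0 : (0:ℝ) ≤ (d:ℝ) - 1 := by
    have : (1:ℝ) ≤ (d:ℝ) := by exact_mod_cast hd1
    linarith
  have hcast : (d:ℝ) - 1 = ((d-1 : ℕ) : ℝ) := by
    rw [Nat.cast_sub hd1]; norm_num
  have hcb : μH[(d:ℝ)-1] (Metric.closedBall (0 : Fin (d-1) → ℝ) R) < ⊤ := by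
    rw [hcast]
    exact auxPiFinite (d-1) _ Metric.isBounded_closedBall
  have hSfin : μH[(d:ℝ)-1] S < ⊤ := by
    refine lt_of_le_of_lt (measure_mono inter_subset_left) ?_
    rw [Set.singleton_prod]
    refine lt_of_le_of_lt
      ((LipschitzWith.prodMk_left (((0:E m), (1:ℝ)))).hausdorffMeasure_image_le hd0 _) ?_
    refine ENNReal.mul_lt_top ?_ hcb
    simp
  calc μH[(d:ℝ)-1] ({q : E d × E m | PsiMap hmd f q = 0 ∧ ‖q.2‖ = 1} ∩ U)
      ≤ μH[(d:ℝ)-1] (inv '' S) := measure_mono hsub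
    _ ≤ (c : ℝ≥0∞) ^ ((d:ℝ)-1) * μH[(d:ℝ)-1] S := by
        have := (hlip.mono (inter_subset_right : S ⊆ t)).hausdorffMeasure_image_le hd0
        exact this
    _ < ⊤ := ENNReal.mul_lt_top
        (ENNReal.rpow_lt_top_of_nonneg hd0 ENNReal.coe_ne_top) hSfin

/-- if `Ψ^f` is transversal to `{0}` on `ℝ^d × S^{m−1}` (its
differential, restricted to the tangent space `ℝ^d × v^⊥`, is surjective at
every zero), then the critical set of `f` has locally finite
`(d−1)`-Hausdorff measure. -/
theorem statement15 (d m : ℕ) (hm : 1 ≤ m) (hmd : m ≤ d)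
    (f : E d → E m) (hf : ContDiff ℝ 2 f)
    (htrans : ∀ x : E d, ∀ v : E m, ‖v‖ = 1 → PsiMap hmd f (x, v) = 0 →
      ∀ z : E m, ∃ u : E d, ∃ w : E m, ⟪w, v⟫ = 0 ∧
        fderiv ℝ (PsiMap hmd f) (x, v) (u, w) = z) :
    ∀ K : Set (E d), IsCompact K →
      μH[(d:ℝ) - 1] ({x : E d | (jac f x).rank ≤ m - 1} ∩ K) < ⊤ := by
  intro K hK
  have hd1 : 1 ≤ d := le_trans hm hmd
  have hd0 : (0:ℝ) ≤ (d:ℝ) - 1 := by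
    have : (1:ℝ) ≤ (d:ℝ) := by exact_mod_cast hd1
    linarith
  set M' : Set (E d × E m) := {q | PsiMap hmd f q = 0 ∧ ‖q.2‖ = 1} with hM'
  set Mc : Set (E d × E m) :=
    (K ×ˢ Metric.sphere (0:E m) 1) ∩ {q | PsiMap hmd f q = 0} with hMc
  have hMcM' : Mc ⊆ M' := by
    rintro q ⟨⟨_, hq2⟩, hq0⟩
    refine ⟨hq0, ?_⟩
    simpa [dist_zero_right] using hq2
  have hMcCompact : IsCompact Mc := by
    apply (hK.prod (isCompact_sphere (0:E m) 1)).inter_right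
    have : {q : E d × E m | PsiMap hmd f q = 0} = PsiMap hmd f ⁻¹' {0} := by
      ext q; simp
    rw [this]
    exact IsClosed.preimage ((psi_contDiff hmd f hf).continuous) isClosed_singleton
  -- choose neighborhoods
  have key : ∀ p : E d × E m, ∃ U ∈ 𝓝 p, p ∈ M' → μH[(d:ℝ)-1] (M' ∩ U) < ⊤ := by
    intro p
    by_cases hp : p ∈ M'
    · obtain ⟨hp0, hp1⟩ := hp
      have htr' : ∀ z : E m, ∃ u : E d, ∃ w : E m, ⟪w, p.2⟫ = 0 ∧
          fderiv ℝ (PsiMap hmd f) p (u, w) = z := by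
        intro z
        have := htrans p.1 p.2 hp1 (by rwa [Prod.mk.eta]) z
        simpa [Prod.mk.eta] using this
      obtain ⟨U, hU, hfin⟩ := local_finite hm hmd f hf p hp1 hp0 htr'
      exact ⟨U, hU, fun _ => hfin⟩
    · exact ⟨univ, Filter.univ_mem, fun h => absurd h hp⟩
  choose U hUnhds hUfin using key
  obtain ⟨s, hsMc, hscover⟩ := hMcCompact.elim_nhds_subcover U (fun p _ => hUnhds p)
  have hMcfin : μH[(d:ℝ)-1] Mc < ⊤ := by
    have hsub : Mc ⊆ ⋃ p ∈ s, (M' ∩ U p) := by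
      intro q hq
      obtain ⟨p, hps, hqU⟩ := mem_iUnion₂.mp (hscover hq)
      exact mem_iUnion₂.mpr ⟨p, hps, hMcM' hq, hqU⟩
    refine lt_of_le_of_lt (measure_mono hsub) ?_
    refine lt_of_le_of_lt (measure_biUnion_finset_le s _) ?_
    rw [ENNReal.sum_lt_top]
    intro p hps
    exact hUfin p (hMcM' (hsMc p hps))
  -- projection
  have hproj : {x : E d | (jac f x).rank ≤ m - 1} ∩ K ⊆ Prod.fst '' Mc := by
    rintro x ⟨hxrank, hxK⟩
    obtain ⟨v, hv1, hv0⟩ := exists_unit_kernel hm (jac f x) hxrank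
    refine ⟨(x, v), ⟨⟨hxK, ?_⟩, ?_⟩, rfl⟩
    · simp [Metric.mem_sphere, dist_zero_right, hv1]
    · show PsiMap hmd f (x, v) = 0
      ext i
      rw [PiLp.zero_apply]
      exact hv0 (Fin.castLE hmd i)
  refine lt_of_le_of_lt (measure_mono hproj) ?_
  refine lt_of_le_of_lt (LipschitzWith.prod_fst.hausdorffMeasure_image_le hd0 Mc) ?_
  refine ENNReal.mul_lt_top ?_ hMcfin
  exact ENNReal.rpow_lt_top_of_nonneg hd0 ENNReal.coe_ne_top

end
end
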